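/- Let N ≥ 2, −1/(N−1) < ρ < 1, let σ_1,…,σ_N > 0, let D = diag(σ_1,…,σ_N), and let Σ = D·R(ρ)·D (the weak equicorrelation covariance matrix). Then ιᵀΣ⁻¹ι = ((1+(N−1)ρ)·Σ_{i=1}^N σ_i⁻² − ρ·(Σ_{i=1}^N σ_i⁻¹)²) / ((1−ρ)(1+(N−1)ρ)). -/
import Mathlib


open Matrix

/-- Weak equicorrelation: with `Σ = D·R(ρ)·D`, `D = diag(σ_1,…,σ_N)`,
`ιᵀΣ⁻¹ι = ((1+(N−1)ρ)·Σσᵢ⁻² − ρ·(Σσᵢ⁻¹)²)/((1−ρ)(1+(N−1)ρ))`. -/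
theorem stmt12 (N : ℕ) (hN : 2 ≤ N) (ρ : ℝ)
    (h1 : -1 / ((N : ℝ) - 1) < ρ) (h2 : ρ < 1)
    (σ : Fin N → ℝ) (hσ : ∀ i, 0 < σ i)
    (R : Matrix (Fin N) (Fin N) ℝ)
    (hR : R = Matrix.of fun i j => if i = j then (1 : ℝ) else ρ)
    (D : Matrix (Fin N) (Fin N) ℝ) (hD : D = Matrix.diagonal σ)
    (S : Matrix (Fin N) (Fin N) ℝ) (hS : S = D * R * D)
    (ι : Fin N → ℝ) (hι : ι = fun _ => 1) :
    ι ⬝ᵥ (S⁻¹ *ᵥ ι) =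
      ((1 + ((N : ℝ) - 1) * ρ) * (∑ i, (σ i) ^ (-2 : ℤ)) -
        ρ * (∑ i, (σ i)⁻¹) * (∑ i, (σ i)⁻¹)) /
      ((1 - ρ) * (1 + ((N : ℝ) - 1) * ρ)) := by
  have hN1 : (0 : ℝ) < (N : ℝ) - 1 := by
    have : (2 : ℝ) ≤ (N : ℝ) := by exact_mod_cast hN
    linarith
  have hc1 : (0 : ℝ) < 1 - ρ := by linarith
  have hc2 : (0 : ℝ) < 1 + ((N : ℝ) - 1) * ρ := by
    have := (div_lt_iff₀ hN1).mp h1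
    nlinarith
  set c1 : ℝ := 1 - ρ with hc1def
  set c2 : ℝ := 1 + ((N : ℝ) - 1) * ρ with hc2def
  set A : ℝ := 1 / c1 - ρ / (c1 * c2) with hA
  set B : ℝ := -ρ / (c1 * c2) with hB
  set Rinv : Matrix (Fin N) (Fin N) ℝ :=
    Matrix.of (fun i j => if i = j then A else B) with hRinv
  set Dinv : Matrix (Fin N) (Fin N) ℝ := Matrix.diagonal (fun i => (σ i)⁻¹) with hDinv
  have hσne : ∀ i, σ i ≠ 0 := fun i => (hσ i).ne'
  -- key expansion of the sum appearing in R * Rinv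
  have expand : ∀ i j : Fin N,
      ∑ k, (if i = k then (1 : ℝ) else ρ) * (if k = j then A else B)
        = (N : ℝ) * (ρ * B) + ρ * (A - B) + B * (1 - ρ)
          + (if i = j then (1 - ρ) * (A - B) else 0) := by
    intro i j
    have hterm : ∀ k : Fin N,
        (if i = k then (1 : ℝ) else ρ) * (if k = j then A else B)
          = ρ * B + (if k = j then ρ * (A - B) else 0)
            + (if i = k then B * (1 - ρ) else 0)
            + (if i = k then (if k = j then (1 - ρ) * (A - B) else 0) else 0) := by
      intro k
      split_ifs <;> ring
    simp_rw [hterm]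
    rw [Finset.sum_add_distrib, Finset.sum_add_distrib, Finset.sum_add_distrib]
    simp [Finset.sum_ite_eq, Finset.sum_ite_eq', Finset.sum_const, mul_comm]
  have hRR : R * Rinv = 1 := by
    ext i j
    rw [hR, hRinv]
    rw [Matrix.mul_apply]
    simp only [Matrix.of_apply]
    rw [expand i j]
    have hc1' : c1 ≠ 0 := hc1.ne'
    have hc2' : c2 ≠ 0 := hc2.ne'
    by_cases h : i = j
    · subst h
      rw [if_pos rfl, Matrix.one_apply_eq, hA, hB]
      field_simp
      ring
    · rw [if_neg h, Matrix.one_apply_ne h, hA, hB]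
      field_simp
      ring
  have hDD : D * Dinv = 1 := by
    rw [hD, hDinv, Matrix.diagonal_mul_diagonal,
      show (fun i => σ i * (σ i)⁻¹) = fun _ : Fin N => (1 : ℝ) from
        funext fun i => mul_inv_cancel₀ (hσne i), Matrix.diagonal_one]
  have hSM : S * (Dinv * Rinv * Dinv) = 1 := by
    rw [hS]
    calc D * R * D * (Dinv * Rinv * Dinv)
        = D * (R * ((D * Dinv) * (Rinv * Dinv))) := by
          simp only [Matrix.mul_assoc]
      _ = D * ((R * Rinv) * Dinv) := by rw [hDD, one_mul, Matrix.mul_assoc]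
      _ = D * Dinv := by rw [hRR, one_mul]
      _ = 1 := hDD
  have hSinv : S⁻¹ = Dinv * Rinv * Dinv := Matrix.inv_eq_right_inv hSM
  rw [hSinv, hι]
  -- compute the quadratic form
  have hMentry : ∀ i j, (Dinv * Rinv * Dinv) i j
      = (σ i)⁻¹ * (if i = j then A else B) * (σ j)⁻¹ := by
    intro i j
    rw [hDinv, hRinv, Matrix.mul_diagonal, Matrix.diagonal_mul]
    simp
  have hQF : (fun _ : Fin N => (1:ℝ)) ⬝ᵥ ((Dinv * Rinv * Dinv) *ᵥ fun _ => 1)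
      = ∑ i, ∑ j, (σ i)⁻¹ * (if i = j then A else B) * (σ j)⁻¹ := by
    simp only [dotProduct, Matrix.mulVec, one_mul, mul_one]
    exact Finset.sum_congr rfl fun i _ => Finset.sum_congr rfl fun j _ => hMentry i j
  rw [hQF]
  have hterm2 : ∀ i j : Fin N, (σ i)⁻¹ * (if i = j then A else B) * (σ j)⁻¹
      = B * ((σ i)⁻¹ * (σ j)⁻¹) + (if i = j then (σ i)⁻¹ * (σ j)⁻¹ * (A - B) else 0) := by
    intro i j
    by_cases h : i = j <;> simp [h] <;> ring
  simp_rw [hterm2, Finset.sum_add_distrib, Finset.sum_ite_eq, Finset.mem_univ, if_true,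
    ← Finset.mul_sum, ← Finset.sum_mul]
  have hz : ∀ i, (σ i) ^ (-2 : ℤ) = (σ i)⁻¹ * (σ i)⁻¹ := by
    intro i
    rw [show (-2 : ℤ) = -1 + -1 by norm_num, zpow_add₀ (hσne i), _root_.zpow_neg, zpow_one]
  simp_rw [hz]
  rw [hA, hB]
  field_simp
  ring
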